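/- (Lemma 4.1) Let N ≥ 2, let ℏ, z_1, z_2 ∈ ℂ with ℏ ≠ 0, z_1 ≠ z_2, z_1 + ℏ ≠ 0, z_2 ≠ 0, and let q_1,…,q_N ∈ ℂ be pairwise distinct. Then the semi-dynamical rational GL_N R-matrix satisfies the symmetry-of-arguments property R^{sd}(ℏ, z_1, z_2 | q) = R^{sd}(z_1−z_2, ℏ+z_2, z_2 | q) · P_{12}. -/

import Mathlib

open Matrix Finset
open scoped Kronecker

noncomputable section

/-- The matrix unit `E_{ij}`. -/
def Eu (N : ℕ) (i j : Fin N) : Matrix (Fin N) (Fin N) ℂ := Matrix.single i j 1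

/-- The permutation operator `P_{12} = Σ_{i,j} E_{ij} ⊗ E_{ji}`. -/
def Pmat (N : ℕ) : Matrix (Fin N × Fin N) (Fin N × Fin N) ℂ :=
  ∑ i, ∑ j, Eu N i j ⊗ₖ Eu N j i

/-- The semi-dynamical rational GL_N R-matrix `R^{sd}(ℏ,z_1,z_2|q)`. -/
def Rsd (N : ℕ) (hb z1 z2 : ℂ) (q : Fin N → ℂ) : Matrix (Fin N × Fin N) (Fin N × Fin N) ℂ :=
  (∑ i, ∑ j ∈ Finset.univ.erase i, (1/(z1 - z2) + (N : ℂ)/(q j - q i)) • (Eu N i j ⊗ₖ Eu N j i))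
  + (∑ i, ∑ j ∈ Finset.univ.erase i, (1/hb + (N : ℂ)/(q j - q i)) • (Eu N i i ⊗ₖ Eu N j j))
  - (∑ i, ∑ j ∈ Finset.univ.erase i, (1/(z1 + hb) + (N : ℂ)/(q j - q i)) • (Eu N i j ⊗ₖ Eu N j j))
  + (∑ i, ∑ j ∈ Finset.univ.erase i, (1/z2 + (N : ℂ)/(q j - q i)) • (Eu N j j ⊗ₖ Eu N i j))
  + (1/(z1 - z2) + 1/z2 + 1/hb - 1/(z1 + hb)) • ∑ i, Eu N i i ⊗ₖ Eu N i i

lemma Eu_apply (N : ℕ) (i j a b : Fin N) :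
    Eu N i j a b = if i = a ∧ j = b then 1 else 0 := by
  simp [Eu, Matrix.single]

lemma Pmat_apply (N : ℕ) (a b c d : Fin N) :
    Pmat N (a, b) (c, d) = if a = d ∧ b = c then 1 else 0 := by
  simp [Pmat, Eu_apply, Matrix.sum_apply, Matrix.kroneckerMap_apply, ite_and]
  aesop

lemma mul_Pmat (N : ℕ) (M : Matrix (Fin N × Fin N) (Fin N × Fin N) ℂ) (a b c d : Fin N) :
    (M * Pmat N) (a, b) (c, d) = M (a, b) (d, c) := by
  rw [Matrix.mul_apply]
  rw [Fintype.sum_prod_type]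
  simp [Pmat_apply, ite_and]

lemma hsum1 {N : ℕ} (p : Fin N → Prop) [DecidablePred p] (f : Fin N → ℂ) (d : Fin N) :
    (∑ x : Fin N, if p x then if x = d then f x else 0 else 0) = if p d then f d else 0 := by
  rw [Finset.sum_congr rfl (g := fun x => if x = d then if p x then f x else 0 else 0)
    (fun x _ => by rcases eq_or_ne x d with rfl | h
                   · simp
                   · simp [h])]
  rw [Finset.sum_ite_eq']
  simp

lemma hsum2 {N : ℕ} (f : Fin N → Fin N → ℂ) (b : Fin N) :
    (∑ x : Fin N, ∑ x1 ∈ Finset.univ.erase x, if x = b then f x x1 else 0)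
      = ∑ x1 ∈ Finset.univ.erase b, f b x1 := by
  rw [Finset.sum_congr rfl (g := fun x => if x = b then ∑ x1 ∈ Finset.univ.erase x, f x x1 else 0)
    (fun x _ => by split_ifs <;> simp_all)]
  rw [Finset.sum_ite_eq']
  simp

lemma hsum3 {N : ℕ} (f : Fin N → ℂ) (b d : Fin N) :
    (∑ x1 ∈ Finset.univ.erase b, if x1 = d then f x1 else 0)
      = if d = b then 0 else f d := by
  rw [Finset.sum_ite_eq']
  by_cases h : d = b <;> simp [h]

lemma hpull {α : Type*} [Fintype α] (p : α → Prop) [DecidablePred p] (cnd : Prop)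
    [Decidable cnd] (g : α → ℂ) :
    (∑ x : α, if p x then if cnd then g x else 0 else 0)
      = if cnd then ∑ x : α, if p x then g x else 0 else 0 := by
  split_ifs <;> simp

set_option maxHeartbeats 4000000 in
set_option maxRecDepth 20000 in
/-- Lemma 4.1. Symmetry-of-arguments property of the semi-dynamical
rational GL_N R-matrix: `R^{sd}(ℏ,z_1,z_2|q) = R^{sd}(z_1−z_2, ℏ+z_2, z_2|q)·P₁₂`. -/
theorem Rsd_symmetry_of_arguments (N : ℕ) (hN : 2 ≤ N) (hb z1 z2 : ℂ) (hhb : hb ≠ 0)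
    (h12 : z1 ≠ z2) (hz1p : z1 + hb ≠ 0) (hz2 : z2 ≠ 0)
    (q : Fin N → ℂ) (hq : Function.Injective q) :
    Rsd N hb z1 z2 q = Rsd N (z1 - z2) (hb + z2) z2 q * Pmat N := by
  ext ⟨a, b⟩ ⟨c, d⟩
  rw [mul_Pmat]
  simp only [Rsd, Matrix.add_apply, Matrix.sub_apply, Matrix.smul_apply, Matrix.sum_apply,
    Matrix.kroneckerMap_apply, Eu_apply, smul_eq_mul, mul_ite, mul_one, mul_zero, ite_and,
    Finset.sum_ite_eq, Finset.sum_ite_eq', Finset.mem_erase, Finset.mem_univ, and_true,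
    hsum1, hsum2, hsum3, hpull, if_true]
  have e1 : hb + z2 - z2 = hb := by ring
  have e2 : hb + z2 + (z1 - z2) = z1 + hb := by ring
  rw [e1, e2]
  by_cases hbc : b = c <;> by_cases hbd : b = d <;> by_cases hba : b = a <;>
    by_cases hca : c = a <;> by_cases hda : d = a <;>
    simp_all [eq_comm] <;> ring
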